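/- arXiv:0810.5522 — 2 statements merged into one kernel-verified Lean document; each statement's English description precedes it below -/
import Mathlib

section
/- Let G be a finite simple graph with two adjacent vertices u and v, and let G~ be the graph obtained from G by toggling the adjacency of every pair (t,w) with t ∈ N(u), w ∈ N(v)\N(u), t ≠ w, t,w ∉ {u,v}, and every pair (t,w) with t ∈ N(v), w ∈ N(u)\N(v), t ≠ w, t,w ∉ {u,v} (the pivot operation on the edge {u,v}). If corank(A(G) + E) = 0 over Z_2, then corank(A(G~) + E) = 0. -/
open Matrix LaurentPolynomial
open scoped Classical

noncomputable section

def adjMatS {V : Type} (G : SimpleGraph V) (s : Finset V) : Matrix s s (ZMod 2) :=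
  fun i j => if G.Adj i.1 j.1 then 1 else 0

def corankS {V : Type} (G : SimpleGraph V) (s : Finset V) : ℕ :=
  s.card - (adjMatS G s).rank

def adjMat {V : Type} [Fintype V] (G : SimpleGraph V) : Matrix V V (ZMod 2) :=
  fun i j => if G.Adj i j then 1 else 0

def corankM {m : Type} [Fintype m] (M : Matrix m m (ZMod 2)) : ℕ :=
  Fintype.card m - M.rank

def alphaCount {V : Type} [Fintype V] (σ : V → Bool) (s : Finset V) : ℕ :=
  (s.filter (fun i => σ i = false)).card + ((sᶜ).filter (fun i => σ i = true)).card

def bracket {V : Type} [Fintype V] (G : SimpleGraph V) (σ : V → Bool) : LaurentPolynomial ℚ :=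
  ∑ s : Finset V, T (2 * (alphaCount σ s : ℤ) - (Fintype.card V : ℤ)) *
    (-T 2 - T (-2)) ^ (corankS G s)

def lspan (p : LaurentPolynomial ℚ) : ℤ := (WithBot.unbotD 0 p.coeff.support.max) - (WithTop.untopD 0 p.coeff.support.min)

def Bmat {V : Type} [Fintype V] (G : SimpleGraph V) (x : V) : Matrix V V (ZMod 2) :=
  adjMat G + 1 + Matrix.single x x 1

def writhe {V : Type} [Fintype V] (G : SimpleGraph V) (σ : V → Bool) : ℤ :=
  ∑ x, (-1 : ℤ) ^ (corankM (Bmat G x)) * (if σ x then 1 else -1)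

def extAdj {V : Type} (G : SimpleGraph V) (N : Set V) : V ⊕ Bool → V ⊕ Bool → Prop
  | .inl i, .inl j => G.Adj i j
  | .inl i, .inr _ => i ∈ N
  | .inr _, .inl j => j ∈ N
  | .inr _, .inr _ => False

def ext2 {V : Type} (G : SimpleGraph V) (N : Set V) : SimpleGraph (V ⊕ Bool) where
  Adj := extAdj G N
  symm := ⟨by
    rintro (i|b) (j|c) h
    · exact G.adj_symm h
    · exact h
    · exact h
    · exact h⟩
  loopless := ⟨by
    rintro (i|b) h
    · exact G.irrefl h
    · exact h⟩

def optExt {V : Type} (G : SimpleGraph V) : SimpleGraph (Option V) where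
  Adj x y := match x, y with
    | some i, some j => G.Adj i j
    | _, _ => False
  symm := ⟨by
    rintro (_|i) (_|j) h
    · exact h
    · exact h
    · exact h
    · exact G.adj_symm h⟩
  loopless := ⟨by
    rintro (_|i) h
    · exact h
    · exact G.irrefl h⟩

/-- One ordered toggle condition for the pivot move on the edge {u,v}:
`x ∈ N(u), y ∈ N(v)\N(u)` or `x ∈ N(v), y ∈ N(u)\N(v)`. -/
def pivotTog {V : Type} (G : SimpleGraph V) (u v x y : V) : Prop :=
  (G.Adj u x ∧ G.Adj v y ∧ ¬ G.Adj u y) ∨ (G.Adj v x ∧ G.Adj u y ∧ ¬ G.Adj v y)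


lemma pivotAux_corank_iff {m : Type} [Fintype m] (M : Matrix m m (ZMod 2)) :
    corankM M = 0 ↔ IsUnit M := by
  constructor
  · intro h
    have hle : M.rank ≤ Fintype.card m := M.rank_le_card_width
    have hrank : M.rank = Fintype.card m := by
      unfold corankM at h; omega
    rw [← Matrix.mulVec_surjective_iff_isUnit]
    have htop : LinearMap.range M.mulVecLin = ⊤ := by
      apply Submodule.eq_top_of_finrank_eq
      rw [← Matrix.rank, hrank, Module.finrank_pi]
    intro y
    obtain ⟨x, hx⟩ := LinearMap.range_eq_top.mp htop y
    exact ⟨x, by simpa [Matrix.mulVecLin_apply] using hx⟩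
  · intro h
    unfold corankM
    rw [Matrix.rank_of_isUnit M h, Nat.sub_self]

lemma pivotAux_ind_xor (a b : Prop) [Decidable a] [Decidable b] :
    (if Xor' a b then (1:ZMod 2) else 0) = (if a then 1 else 0) + (if b then 1 else 0) := by
  by_cases ha : a <;> by_cases hb : b <;>
    simp [Xor', ha, hb, show (1:ZMod 2) + 1 = 0 from rfl]

lemma pivotAux_toggle_eq {V : Type} (G : SimpleGraph V) (u v x y : V) (huv : G.Adj u v) :
    (if (x ≠ u ∧ x ≠ v ∧ y ≠ u ∧ y ≠ v ∧ x ≠ y ∧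
        (pivotTog G u v x y ∨ pivotTog G u v y x)) then (1:ZMod 2) else 0) =
    ((if G.Adj u x then 1 else 0) + (if x = v then 1 else 0)) *
      ((if G.Adj v y then 1 else 0) + (if y = u then 1 else 0)) +
    ((if G.Adj v x then 1 else 0) + (if x = u then 1 else 0)) *
      ((if G.Adj u y then 1 else 0) + (if y = v then 1 else 0)) := by
  have hne : u ≠ v := G.ne_of_adj huv
  have hvu : G.Adj v u := huv.symm
  by_cases hxu : x = u
  · subst hxu
    simp [hne, hvu, G.irrefl, show (1:ZMod 2) + 1 = 0 from rfl]
  by_cases hxv : x = v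
  · subst hxv
    simp [hne.symm, huv, G.irrefl, show (1:ZMod 2) + 1 = 0 from rfl]
  by_cases hyu : y = u
  · subst hyu
    simp [hne, hvu, G.irrefl, hxu, hxv, show (1:ZMod 2) + 1 = 0 from rfl]
  by_cases hyv : y = v
  · subst hyv
    simp [hne.symm, huv, G.irrefl, hxu, hxv, show (1:ZMod 2) + 1 = 0 from rfl]
  by_cases hxy : x = y
  · subst hxy
    rw [if_neg (fun h => h.2.2.2.2.1 rfl), mul_comm]
    exact (CharTwo.add_self_eq_zero _).symm
  by_cases h1 : G.Adj u x <;> by_cases h2 : G.Adj v x <;>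
    by_cases h3 : G.Adj u y <;> by_cases h4 : G.Adj v y <;>
    simp [pivotTog, hxu, hxv, hyu, hyv, hxy, h1, h2, h3, h4] <;> decide

/-- Ω_g4 (pivot) preserves corank(A+E)=0. -/
theorem corank_AE_pivot {V : Type} [Fintype V] (G H : SimpleGraph V)
    (u v : V) (huv : G.Adj u v)
    (hH : ∀ x y, H.Adj x y ↔
      Xor' (G.Adj x y)
        (x ≠ u ∧ x ≠ v ∧ y ≠ u ∧ y ≠ v ∧ x ≠ y ∧
          (pivotTog G u v x y ∨ pivotTog G u v y x)))
    (h : corankM (adjMat G + 1) = 0) :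
    corankM (adjMat H + 1) = 0 := by
  have hBu : IsUnit (adjMat G + 1) := (pivotAux_corank_iff _).mp h
  have hKeyEntry : ∀ x y : V, (if H.Adj x y then (1:ZMod 2) else 0) =
      (if G.Adj x y then 1 else 0) +
      (((if G.Adj u x then 1 else 0) + (if x = v then 1 else 0)) *
        ((if G.Adj v y then 1 else 0) + (if y = u then 1 else 0)) +
      ((if G.Adj v x then 1 else 0) + (if x = u then 1 else 0)) *
        ((if G.Adj u y then 1 else 0) + (if y = v then 1 else 0))) := by
    intro x y
    simp only [hH]
    rw [pivotAux_ind_xor, pivotAux_toggle_eq G u v x y huv]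
  set B : Matrix V V (ZMod 2) := adjMat G + 1 with hBdef
  have hne : u ≠ v := G.ne_of_adj huv
  have hBsymm : Bᵀ = B := by
    ext i j
    simp [hBdef, adjMat, Matrix.transpose_apply, Matrix.one_apply, G.adj_comm, eq_comm]
  have hdetB : IsUnit B.det := (Matrix.isUnit_iff_isUnit_det _).mp hBu
  set C : Matrix V V (ZMod 2) := B⁻¹ with hCdef
  have hBC : B * C = 1 := Matrix.mul_nonsing_inv _ hdetB
  have hCB : C * B = 1 := Matrix.nonsing_inv_mul _ hdetB
  set eu : V → ZMod 2 := Pi.single u 1 with heu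
  set ev : V → ZMod 2 := Pi.single v 1 with hev
  set w : V → ZMod 2 := eu + ev with hw
  set p : V → ZMod 2 := B *ᵥ eu + w with hp
  set q : V → ZMod 2 := B *ᵥ ev + w with hq
  -- p and q entrywise
  have hBentry : ∀ a b : V, B a b = (if G.Adj a b then 1 else 0) + (if a = b then 1 else 0) := by
    intro a b; simp [hBdef, adjMat, Matrix.one_apply]
  have hpx : ∀ x, p x = (if G.Adj u x then 1 else 0) + (if x = v then 1 else 0) := by
    intro x
    simp only [hp, Pi.add_apply, heu, Matrix.mulVec_single_one, Matrix.col_apply, hw, hev, Pi.add_apply]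
    rw [hBentry]
    by_cases hx : x = u <;> simp [hx, Pi.single_apply, G.adj_comm, hne,
      show (1:ZMod 2)+1 = 0 from rfl, G.irrefl]
  have hqx : ∀ x, q x = (if G.Adj v x then 1 else 0) + (if x = u then 1 else 0) := by
    intro x
    simp only [hq, Pi.add_apply, hev, Matrix.mulVec_single_one, Matrix.col_apply, hw, heu, Pi.add_apply]
    rw [hBentry]
    by_cases hx : x = v <;> simp [hx, Pi.single_apply, G.adj_comm, hne.symm,
      show (1:ZMod 2)+1 = 0 from rfl, G.irrefl]
  -- the update matrices
  set Um : Matrix V (Fin 2) (ZMod 2) := (Matrix.of ![p, q])ᵀ with hUm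
  set Wm : Matrix (Fin 2) V (ZMod 2) := Matrix.of ![q, p] with hWm
  have hKey : adjMat H + 1 = B + Um * Wm := by
    ext x y
    have h2 : (Um * Wm) x y = p x * q y + q x * p y := by
      rw [Matrix.mul_apply, Fin.sum_univ_two]; rfl
    show adjMat H x y + (1:Matrix V V (ZMod 2)) x y = B x y + (Um*Wm) x y
    rw [h2, hBentry, Matrix.one_apply]
    show (if H.Adj x y then (1:ZMod 2) else 0) + _ = _
    rw [hKeyEntry x y, hpx, hqx, hpx, hqx]
    ring
  -- symmetric dot product lemma
  have hsymdot : ∀ (a z : V → ZMod 2), (B *ᵥ a) ⬝ᵥ z = a ⬝ᵥ (B *ᵥ z) := by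
    intro a z
    have e : B *ᵥ a = a ᵥ* B := by
      conv_lhs => rw [← hBsymm]
      exact Matrix.mulVec_transpose B a
    rw [Matrix.dotProduct_mulVec, ← e]
  set t : ZMod 2 := w ⬝ᵥ (C *ᵥ w) with ht
  have hkey : ∀ a b : V → ZMod 2, a ⬝ᵥ (B *ᵥ b) = 1 → a ⬝ᵥ w = 1 → w ⬝ᵥ b = 1 →
      (B *ᵥ a + w) ⬝ᵥ (C *ᵥ (B *ᵥ b + w)) = 1 + t := by
    intro a b h1 h2 h3
    have e1 : C *ᵥ (B *ᵥ b + w) = b + C *ᵥ w := by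
      rw [Matrix.mulVec_add, Matrix.mulVec_mulVec, hCB, Matrix.one_mulVec]
    have e2 : (B *ᵥ a) ⬝ᵥ b = 1 := by rw [hsymdot]; exact h1
    have e3 : (B *ᵥ a) ⬝ᵥ (C *ᵥ w) = 1 := by
      rw [hsymdot, Matrix.mulVec_mulVec, hBC, Matrix.one_mulVec]; exact h2
    rw [e1, add_dotProduct, dotProduct_add, dotProduct_add, e2, e3, h3, ← ht]
    rw [show (1:ZMod 2) + 1 = 0 from rfl, zero_add]
  -- basic entries
  have hwu : w u = 1 := by simp [hw, heu, hev, Pi.single_apply, hne]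
  have hwv : w v = 1 := by simp [hw, heu, hev, Pi.single_apply, Ne.symm hne]
  have hdsingle : ∀ (a : V) (z : V → ZMod 2), (Pi.single a 1 : V → ZMod 2) ⬝ᵥ z = z a := by
    intro a z; rw [single_dotProduct, one_mul]
  have hdsingle' : ∀ (a : V) (z : V → ZMod 2), z ⬝ᵥ (Pi.single a 1 : V → ZMod 2) = z a := by
    intro a z; rw [dotProduct_single, mul_one]
  have hdB : ∀ a b : V, ((Pi.single a 1 : V → ZMod 2) ⬝ᵥ (B *ᵥ Pi.single b 1)) = B a b := by
    intro a b; rw [Matrix.mulVec_single_one, hdsingle, Matrix.col_apply]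
  have hBuu : B u u = 1 := by rw [hBentry]; simp [G.irrefl]
  have hBvv : B v v = 1 := by rw [hBentry]; simp [G.irrefl]
  have hBuv : B u v = 1 := by rw [hBentry]; simp [huv, hne]
  have hBvu : B v u = 1 := by rw [hBentry]; simp [huv.symm, Ne.symm hne]
  -- the four dot products
  have h00 : q ⬝ᵥ (C *ᵥ p) = 1 + t :=
    hkey ev eu (by rw [hdB, hBvu]) (by rw [hdsingle, hwv]) (by rw [hdsingle', hwu])
  have h01 : q ⬝ᵥ (C *ᵥ q) = 1 + t :=
    hkey ev ev (by rw [hdB, hBvv]) (by rw [hdsingle, hwv]) (by rw [hdsingle', hwv])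
  have h10 : p ⬝ᵥ (C *ᵥ p) = 1 + t :=
    hkey eu eu (by rw [hdB, hBuu]) (by rw [hdsingle, hwu]) (by rw [hdsingle', hwu])
  have h11 : p ⬝ᵥ (C *ᵥ q) = 1 + t :=
    hkey eu ev (by rw [hdB, hBuv]) (by rw [hdsingle, hwu]) (by rw [hdsingle', hwv])
  -- entries of the 2x2 matrix
  have hentry : ∀ i j : Fin 2, (Wm * C * Um) i j = 1 + t := by
    intro i j
    have hcol : ∀ x, (C * Um) x j = (C *ᵥ ![p,q] j) x := by
      intro x; rw [Matrix.mul_apply]; rfl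
    have hij : (Wm * C * Um) i j = (![q,p] i) ⬝ᵥ (C *ᵥ (![p,q] j)) := by
      rw [Matrix.mul_assoc, Matrix.mul_apply]
      exact Finset.sum_congr rfl fun x _ => by rw [hcol x]; rfl
    rw [hij]
    fin_cases i <;> fin_cases j
    · exact h00
    · exact h01
    · exact h10
    · exact h11
  have h2x2 : (1 + Wm * C * Um) = Matrix.of !![1+(1+t), 1+t; 1+t, 1+(1+t)] := by
    ext i j
    fin_cases i <;> fin_cases j <;>
      simp [Matrix.add_apply, hentry, Matrix.one_apply] <;> rfl
  have hdetH : (adjMat H + 1).det = B.det := by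
    rw [hKey, Matrix.det_add_mul Um Wm hdetB, ← hCdef, h2x2]
    rw [show (Matrix.of !![1+(1+t), 1+t; 1+t, 1+(1+t)]).det
        = (1+(1+t))*(1+(1+t)) - (1+t)*(1+t) from Matrix.det_fin_two_of _ _ _ _]
    rw [show ∀ r : ZMod 2, (1+(1+r))*(1+(1+r)) - (1+r)*(1+r) = 1 from by decide]
    rw [mul_one]
  have hHu : IsUnit (adjMat H + 1) := (Matrix.isUnit_iff_isUnit_det _).mpr (hdetH ▸ hdetB)
  exact (pivotAux_corank_iff _).mpr hHu
end
end

section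
/- Let G be a labeled finite simple graph and let G~ be obtained from G by the second Reidemeister graph-move Ω_g2: adding two non-adjacent vertices u (labeled +) and v (labeled −) that have identical neighborhoods in G. Then ⟨G~⟩ = ⟨G⟩, i.e., the Kauffman bracket polynomial is invariant under Ω_g2. -/
open Matrix LaurentPolynomial
open scoped Classical

noncomputable section

/-! ### Auxiliary lemmas -/

lemma rank_submatrix_surj {K : Type*} [Field K] {m n : Type*} [Fintype m] [Fintype n]
    (A : Matrix m m K) (f : n → m) (hf : Function.Surjective f) :
    (A.submatrix f f).rank = A.rank := by
  rw [Matrix.rank_eq_finrank_span_row, Matrix.rank_eq_finrank_span_row]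
  have hinj : Function.Injective (LinearMap.funLeft K K f) :=
    LinearMap.funLeft_injective_of_surjective K K f hf
  have hr : Set.range (A.submatrix f f) = (LinearMap.funLeft K K f) '' Set.range A := by
    ext v
    constructor
    · rintro ⟨i, rfl⟩
      exact ⟨A (f i), ⟨f i, rfl⟩, rfl⟩
    · rintro ⟨w, ⟨i, rfl⟩, rfl⟩
      obtain ⟨j, rfl⟩ := hf i
      exact ⟨j, rfl⟩
  change Module.finrank K (Submodule.span K (Set.range (A.submatrix f f))) =
    Module.finrank K (Submodule.span K (Set.range A))
  rw [hr, ← Submodule.map_span]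
  exact (Submodule.equivMapOfInjective _ hinj _).finrank_eq.symm

lemma adjMatS_submatrix {W W' : Type} (H : SimpleGraph W) (H' : SimpleGraph W')
    (s : Finset W) (s' : Finset W') (f : ↥s → ↥s')
    (hadj : ∀ x y : ↥s, H.Adj x.1 y.1 ↔ H'.Adj (f x).1 (f y).1) :
    adjMatS H s = (adjMatS H' s').submatrix f f := by
  ext x y
  simp only [adjMatS, Matrix.submatrix_apply]
  exact if_congr (hadj x y) rfl rfl

lemma rank_adjMatS_eq {W W' : Type} (H : SimpleGraph W) (H' : SimpleGraph W')
    (s : Finset W) (s' : Finset W') (f : ↥s → ↥s')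
    (hadj : ∀ x y : ↥s, H.Adj x.1 y.1 ↔ H'.Adj (f x).1 (f y).1)
    (hf : Function.Surjective f) :
    (adjMatS H s).rank = (adjMatS H' s').rank := by
  rw [adjMatS_submatrix H H' s s' f hadj]
  exact rank_submatrix_surj _ f hf

lemma rank_adjMatS_le {W : Type} (H : SimpleGraph W) (s : Finset W) :
    (adjMatS H s).rank ≤ s.card := by
  simpa [Fintype.card_coe] using (adjMatS H s).rank_le_card_width

lemma compl_disjSum {α β : Type} [Fintype α] [Fintype β] [DecidableEq α] [DecidableEq β]
    [DecidableEq (α ⊕ β)] (s : Finset α) (t : Finset β) :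
    (s.disjSum t)ᶜ = sᶜ.disjSum tᶜ := by
  ext (a|b) <;>
    simp [Finset.inl_mem_disjSum, Finset.inr_mem_disjSum]

lemma filter_disjSum {α β : Type} (s : Finset α) (t : Finset β) (p : α ⊕ β → Prop)
    [DecidablePred p] :
    (s.disjSum t).filter p
      = (s.filter fun a => p (Sum.inl a)).disjSum (t.filter fun b => p (Sum.inr b)) := by
  ext (a|b) <;>
    simp [Finset.inl_mem_disjSum, Finset.inr_mem_disjSum]

lemma alpha_disjSum {V : Type} [Fintype V] (σ : V → Bool) (s₀ : Finset V) (t : Finset Bool) :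
    alphaCount (Sum.elim σ (fun c => c)) (s₀.disjSum t)
      = alphaCount σ s₀
        + ((t.filter fun b => b = false).card + ((tᶜ).filter fun b => b = true).card) := by
  simp only [alphaCount, filter_disjSum, compl_disjSum, Sum.elim_inl, Sum.elim_inr,
    Finset.card_disjSum]
  rw [Nat.add_add_add_comm]
  rfl

lemma key_alg (a : ℤ) (c₀ c₁ : ℕ) :
    T (R := ℚ) a * (-T 2 - T (-2)) ^ c₀ + T (a + 2) * (-T 2 - T (-2)) ^ c₁
      + T (a - 2) * (-T 2 - T (-2)) ^ c₁ + T a * (-T 2 - T (-2)) ^ (c₁ + 1)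
    = T a * (-T 2 - T (-2)) ^ c₀ := by
  have h2 : T (R := ℚ) (a + 2) = T a * T 2 := T_add a 2
  have h3 : T (R := ℚ) (a - 2) = T a * T (-2) := T_sub a 2
  rw [pow_succ, h2, h3]
  ring

section Pieces

variable {V : Type} [Fintype V] (G : SimpleGraph V) (N : Set V) (s₀ : Finset V)

lemma corank_empty :
    corankS (ext2 G N) (s₀.disjSum (∅ : Finset Bool)) = corankS G s₀ := by
  have hf : Function.Surjective
      (fun x : ↥s₀ => (⟨Sum.inl x.1, by simp [Finset.inl_mem_disjSum, x.2]⟩ :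
        ↥(s₀.disjSum (∅ : Finset Bool)))) := by
    rintro ⟨(a|b), hz⟩
    · exact ⟨⟨a, by simpa [Finset.inl_mem_disjSum] using hz⟩, rfl⟩
    · rw [Finset.inr_mem_disjSum] at hz
      exact absurd hz (Finset.notMem_empty b)
  have hr := rank_adjMatS_eq G (ext2 G N) s₀ (s₀.disjSum (∅ : Finset Bool))
    (fun x : ↥s₀ => (⟨Sum.inl x.1, by simp [Finset.inl_mem_disjSum, x.2]⟩ :
      ↥(s₀.disjSum (∅ : Finset Bool)))) (fun x y => Iff.rfl) hf
  unfold corankS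
  rw [← hr, Finset.card_disjSum]
  simp

lemma corank_swap :
    corankS (ext2 G N) (s₀.disjSum ({false} : Finset Bool))
      = corankS (ext2 G N) (s₀.disjSum ({true} : Finset Bool)) := by
  have hmem : ∀ x : V ⊕ Bool, x ∈ s₀.disjSum ({false} : Finset Bool) →
      Sum.map id not x ∈ s₀.disjSum ({true} : Finset Bool) := by
    rintro (a|b) hx
    · simpa [Finset.inl_mem_disjSum] using hx
    · rw [Finset.inr_mem_disjSum, Finset.mem_singleton] at hx
      subst hx
      simp [Finset.inr_mem_disjSum]
  have hf : Function.Surjective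
      (fun x : ↥(s₀.disjSum ({false} : Finset Bool)) =>
        (⟨Sum.map id not x.1, hmem x.1 x.2⟩ : ↥(s₀.disjSum ({true} : Finset Bool)))) := by
    rintro ⟨(a|b), hz⟩
    · exact ⟨⟨Sum.inl a, by simpa [Finset.inl_mem_disjSum] using hz⟩, rfl⟩
    · rw [Finset.inr_mem_disjSum, Finset.mem_singleton] at hz
      subst hz
      exact ⟨⟨Sum.inr false, by simp [Finset.inr_mem_disjSum]⟩, rfl⟩
  have hadj : ∀ x y : ↥(s₀.disjSum ({false} : Finset Bool)),
      (ext2 G N).Adj x.1 y.1 ↔ (ext2 G N).Adj (Sum.map id not x.1) (Sum.map id not y.1) := by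
    rintro ⟨(a|b), hx⟩ ⟨(c|d), hy⟩ <;> exact Iff.rfl
  have hr := rank_adjMatS_eq (ext2 G N) (ext2 G N) _ _ _ hadj hf
  unfold corankS
  rw [hr, Finset.card_disjSum, Finset.card_disjSum]
  have h1 : ({false} : Finset Bool).card = ({true} : Finset Bool).card := rfl
  rw [h1]

lemma corank_pair :
    corankS (ext2 G N) (s₀.disjSum ({false, true} : Finset Bool))
      = corankS (ext2 G N) (s₀.disjSum ({true} : Finset Bool)) + 1 := by
  have hmem : ∀ x : V ⊕ Bool, x ∈ s₀.disjSum ({false, true} : Finset Bool) →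
      Sum.map id (fun _ => true) x ∈ s₀.disjSum ({true} : Finset Bool) := by
    rintro (a|b) hx
    · simpa [Finset.inl_mem_disjSum] using hx
    · simp [Finset.inr_mem_disjSum]
  have hf : Function.Surjective
      (fun x : ↥(s₀.disjSum ({false, true} : Finset Bool)) =>
        (⟨Sum.map id (fun _ => true) x.1, hmem x.1 x.2⟩ :
          ↥(s₀.disjSum ({true} : Finset Bool)))) := by
    rintro ⟨(a|b), hz⟩
    · exact ⟨⟨Sum.inl a, by simpa [Finset.inl_mem_disjSum] using hz⟩, rfl⟩
    · rw [Finset.inr_mem_disjSum, Finset.mem_singleton] at hz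
      subst hz
      exact ⟨⟨Sum.inr true, by simp [Finset.inr_mem_disjSum]⟩, rfl⟩
  have hadj : ∀ x y : ↥(s₀.disjSum ({false, true} : Finset Bool)),
      (ext2 G N).Adj x.1 y.1 ↔
        (ext2 G N).Adj (Sum.map id (fun _ => true) x.1) (Sum.map id (fun _ => true) y.1) := by
    rintro ⟨(a|b), hx⟩ ⟨(c|d), hy⟩ <;> exact Iff.rfl
  have hr := rank_adjMatS_eq (ext2 G N) (ext2 G N) _ _ _ hadj hf
  have hle := rank_adjMatS_le (ext2 G N) (s₀.disjSum ({true} : Finset Bool))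
  unfold corankS
  rw [hr, Finset.card_disjSum, Finset.card_disjSum] at *
  have h1 : ({true} : Finset Bool).card = 1 := rfl
  have h2 : ({false, true} : Finset Bool).card = 2 := rfl
  omega

end Pieces

/-- The Kauffman bracket is invariant under the second Reidemeister graph-move
Ω_g2: adding non-adjacent vertices `u = inr true` (labeled `+`) and
`v = inr false` (labeled `-`) with identical neighbourhoods `N` in `G`. -/
theorem bracket_omega2 {V : Type} [Fintype V] (G : SimpleGraph V) (N : Set V)
    (σ : V → Bool) :
    bracket (ext2 G N) (Sum.elim σ (fun c => c)) = bracket G σ := by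
  classical
  have hbij : Function.Bijective (fun p : Finset V × Finset Bool => p.1.disjSum p.2) := by
    constructor
    · rintro ⟨s, t⟩ ⟨s', t'⟩ h
      simp only [Finset.disjSum_inj] at h
      exact Prod.ext h.1 h.2
    · intro s
      exact ⟨(s.toLeft, s.toRight), s.toLeft_disjSum_toRight⟩
  have hcardW : (Fintype.card (V ⊕ Bool) : ℤ) = (Fintype.card V : ℤ) + 2 := by
    simp [Fintype.card_sum]
  have huniv : (Finset.univ : Finset (Finset Bool))
      = {∅, {false}, {true}, {false, true}} := by decide
  unfold bracket
  rw [← Fintype.sum_bijective _ hbij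
    (fun p : Finset V × Finset Bool =>
      T (2 * (alphaCount (Sum.elim σ (fun c => c)) (p.1.disjSum p.2) : ℤ)
          - (Fintype.card (V ⊕ Bool) : ℤ)) *
        (-T 2 - T (-2)) ^ (corankS (ext2 G N) (p.1.disjSum p.2))) _
    (fun p => rfl)]
  rw [Fintype.sum_prod_type]
  refine Finset.sum_congr rfl fun s₀ _ => ?_
  have a0 := alpha_disjSum σ s₀ (∅ : Finset Bool)
  have af := alpha_disjSum σ s₀ ({false} : Finset Bool)
  have at' := alpha_disjSum σ s₀ ({true} : Finset Bool)
  have ab := alpha_disjSum σ s₀ ({false, true} : Finset Bool)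
  have v0 : (((∅ : Finset Bool)).filter fun b => b = false).card
      + ((((∅ : Finset Bool))ᶜ.filter fun b => b = true)).card = 1 := by decide
  have vf : ((({false} : Finset Bool)).filter fun b => b = false).card
      + (((({false} : Finset Bool))ᶜ.filter fun b => b = true)).card = 2 := by decide
  have vt : ((({true} : Finset Bool)).filter fun b => b = false).card
      + (((({true} : Finset Bool))ᶜ.filter fun b => b = true)).card = 0 := by decide
  have vb : ((({false, true} : Finset Bool)).filter fun b => b = false).card
      + (((({false, true} : Finset Bool))ᶜ.filter fun b => b = true)).card = 1 := by decide
  rw [v0] at a0; rw [vf] at af; rw [vt] at at'; rw [vb] at ab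
  rw [Nat.add_zero] at at'
  rw [huniv]
  rw [Finset.sum_insert (by decide), Finset.sum_insert (by decide),
    Finset.sum_insert (by decide), Finset.sum_singleton]
  dsimp only
  rw [a0, af, at', ab, corank_empty G N s₀, corank_swap G N s₀, corank_pair G N s₀, hcardW]
  push_cast
  have e1 : 2 * ((alphaCount σ s₀ : ℤ) + 1) - ((Fintype.card V : ℤ) + 2)
      = 2 * (alphaCount σ s₀ : ℤ) - (Fintype.card V : ℤ) := by ring
  have e2 : 2 * ((alphaCount σ s₀ : ℤ) + 2) - ((Fintype.card V : ℤ) + 2)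
      = (2 * (alphaCount σ s₀ : ℤ) - (Fintype.card V : ℤ)) + 2 := by ring
  have e3 : 2 * (alphaCount σ s₀ : ℤ) - ((Fintype.card V : ℤ) + 2)
      = (2 * (alphaCount σ s₀ : ℤ) - (Fintype.card V : ℤ)) - 2 := by ring
  rw [e1, e2, e3, ← add_assoc, ← add_assoc]
  exact key_alg (2 * (alphaCount σ s₀ : ℤ) - (Fintype.card V : ℤ)) (corankS G s₀)
    (corankS (ext2 G N) (s₀.disjSum ({true} : Finset Bool)))
end
end
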